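/- Let Ã and S be n×n real symmetric positive semidefinite matrices such that xᵀ S x ≤ M xᵀ Ã x for all x ∈ ℝⁿ, for some constant M > 0. Let T, T̂ ∈ ℝ^{n×n^c} satisfy Tᵀ Ã T = I_{n^c} and T̂ᵀ Ã T̂ = I_{n^c}, with associated Ã-orthogonal projectors Π = T Tᵀ Ã and Π̂ = T̂ T̂ᵀ Ã. Suppose further that for some τ > 0 the approximation property (v − Π v)ᵀ S (v − Π v) ≤ τ vᵀ Ã v holds for all v ∈ ℝⁿ. Then for every v ∈ ℝⁿ, (v − Π̂ v)ᵀ S (v − Π̂ v) ≤ (2τ + 4 M (n^c − ‖T̂ᵀ Ã T‖_F²)) · vᵀ Ã v, where ‖·‖_F denotes the Frobenius norm. -/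

import Mathlib

open Matrix

/-- Squared Frobenius norm of a real matrix. -/
noncomputable def frobSq {a b : ℕ} (M : Matrix (Fin a) (Fin b) ℝ) : ℝ :=
  ∑ i, ∑ j, (M i j) ^ 2

lemma frobSq_nonneg {a b : ℕ} (C : Matrix (Fin a) (Fin b) ℝ) : 0 ≤ frobSq C :=
  Finset.sum_nonneg fun _ _ => Finset.sum_nonneg fun _ _ => sq_nonneg _

lemma frobSq_transpose {a b : ℕ} (C : Matrix (Fin a) (Fin b) ℝ) : frobSq Cᵀ = frobSq C := by
  unfold frobSq; rw [Finset.sum_comm]; rfl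

lemma frobSq_eq_trace {a b : ℕ} (C : Matrix (Fin a) (Fin b) ℝ) :
    frobSq C = (Cᵀ * C).trace := by
  unfold frobSq
  rw [Finset.sum_comm]
  simp [Matrix.trace, Matrix.mul_apply, Matrix.diag, sq, Matrix.transpose_apply]

lemma quad_conj {m k : ℕ} (E : Matrix (Fin m) (Fin k) ℝ) (A : Matrix (Fin m) (Fin m) ℝ)
    (x : Fin k → ℝ) :
    x ⬝ᵥ (Eᵀ * A * E).mulVec x = (E.mulVec x) ⬝ᵥ A.mulVec (E.mulVec x) := by
  rw [← Matrix.mulVec_mulVec, ← Matrix.mulVec_mulVec, Matrix.dotProduct_mulVec,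
    Matrix.vecMul_transpose]

lemma quad_eq {m k : ℕ} (B : Matrix (Fin m) (Fin k) ℝ) (x : Fin k → ℝ) :
    x ⬝ᵥ (Bᵀ * B).mulVec x = (B.mulVec x) ⬝ᵥ (B.mulVec x) := by
  rw [← Matrix.mulVec_mulVec, Matrix.dotProduct_mulVec, Matrix.vecMul_transpose]

lemma mulVec_self_le {a b : ℕ} (C : Matrix (Fin a) (Fin b) ℝ) (u : Fin b → ℝ) :
    (C.mulVec u) ⬝ᵥ (C.mulVec u) ≤ frobSq C * (u ⬝ᵥ u) := by
  unfold frobSq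
  rw [dotProduct, Finset.sum_mul]
  apply Finset.sum_le_sum
  intro i _
  have h := Finset.sum_mul_sq_le_sq_mul_sq Finset.univ (fun j => C i j) u
  calc (C.mulVec u) i * (C.mulVec u) i = (∑ j, C i j * u j) ^ 2 := by
        simp [Matrix.mulVec, dotProduct, sq]
    _ ≤ (∑ j, C i j ^ 2) * ∑ j, u j ^ 2 := h
    _ = (∑ j, C i j ^ 2) * (u ⬝ᵥ u) := by simp [dotProduct, sq]

set_option maxHeartbeats 1000000 in
/-- the key local estimate. If the exact coarse space satisfies the
approximation property with constant `τ`, then the approximate coarse space satisfies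
it with constant `2τ + 4 M (n^c − ‖T̂ᵀ Ã T‖_F²)`. -/
theorem approximate_coarse_space_estimate {n nc : ℕ}
    (A S : Matrix (Fin n) (Fin n) ℝ)
    (hA : A.PosSemidef) (hS : S.PosSemidef)
    (M : ℝ) (hM : 0 < M)
    (hdom : ∀ x : Fin n → ℝ, x ⬝ᵥ S.mulVec x ≤ M * (x ⬝ᵥ A.mulVec x))
    (T That : Matrix (Fin n) (Fin nc) ℝ)
    (hT : Tᵀ * A * T = 1) (hThat : Thatᵀ * A * That = 1)
    (τ : ℝ) (hτ : 0 < τ)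
    (happrox : ∀ v : Fin n → ℝ,
      (v - (T * Tᵀ * A).mulVec v) ⬝ᵥ S.mulVec (v - (T * Tᵀ * A).mulVec v) ≤
        τ * (v ⬝ᵥ A.mulVec v)) :
    ∀ v : Fin n → ℝ,
      (v - (That * Thatᵀ * A).mulVec v) ⬝ᵥ
          S.mulVec (v - (That * Thatᵀ * A).mulVec v) ≤
        (2 * τ + 4 * M * ((nc : ℝ) - frobSq (Thatᵀ * A * T))) *
          (v ⬝ᵥ A.mulVec v) := by
  intro v
  have hAT : Aᵀ = A := by
    rw [← Matrix.conjTranspose_eq_transpose_of_trivial]; exact hA.1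
  have hAnn : ∀ x : Fin n → ℝ, 0 ≤ x ⬝ᵥ A.mulVec x := fun x => by
    simpa using hA.dotProduct_mulVec_nonneg x
  have hSnn : ∀ x : Fin n → ℝ, 0 ≤ x ⬝ᵥ S.mulVec x := fun x => by
    simpa using hS.dotProduct_mulVec_nonneg x
  set G := Thatᵀ * A * T with hG
  have hGT : Gᵀ = Tᵀ * A * That := by
    rw [hG, Matrix.transpose_mul, Matrix.transpose_mul, Matrix.transpose_transpose, hAT,
      Matrix.mul_assoc]
  set L := (open scoped MatrixOrder in CFC.sqrt A) with hLdef
  have hLL : L * L = A := by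
    open scoped MatrixOrder in exact CFC.sqrt_mul_sqrt_self A hA.nonneg
  have hLT : Lᵀ = L := by
    rw [← Matrix.conjTranspose_eq_transpose_of_trivial]; open scoped MatrixOrder in exact (CFC.sqrt_nonneg A).posSemidef.1
  set C₁ : Matrix (Fin n) (Fin nc) ℝ := T - That * G with hC₁
  set B : Matrix (Fin n) (Fin nc) ℝ := That - T * Gᵀ with hB
  have I1 : C₁ᵀ * A * C₁ = 1 - Gᵀ * G := by
    rw [hC₁]
    simp only [Matrix.transpose_sub, Matrix.transpose_mul, Matrix.sub_mul, Matrix.mul_sub]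
    rw [hT]
    have e1 : Gᵀ * Thatᵀ * A * T = Gᵀ * G := by
      rw [Matrix.mul_assoc Gᵀ, Matrix.mul_assoc Gᵀ, ← hG]
    have e2 : Tᵀ * A * (That * G) = Gᵀ * G := by rw [← Matrix.mul_assoc, hGT]
    have e3 : Gᵀ * Thatᵀ * A * (That * G) = Gᵀ * G := by
      rw [Matrix.mul_assoc Gᵀ, Matrix.mul_assoc Gᵀ, ← Matrix.mul_assoc (Thatᵀ * A) That G,
        hThat, Matrix.one_mul]
    rw [e1, e2, e3]
    abel
  have I2 : Bᵀ * A * B = 1 - G * Gᵀ := by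
    rw [hB]
    simp only [Matrix.transpose_sub, Matrix.transpose_mul, Matrix.transpose_transpose,
      Matrix.sub_mul, Matrix.mul_sub]
    rw [hThat]
    have e1 : G * Tᵀ * A * That = G * Gᵀ := by
      rw [Matrix.mul_assoc G, Matrix.mul_assoc G, ← hGT]
    have e2 : Thatᵀ * A * (T * Gᵀ) = G * Gᵀ := by rw [← Matrix.mul_assoc, ← hG]
    have e3 : G * Tᵀ * A * (T * Gᵀ) = G * Gᵀ := by
      rw [Matrix.mul_assoc G, Matrix.mul_assoc G, ← Matrix.mul_assoc (Tᵀ * A) T Gᵀ,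
        hT, Matrix.one_mul]
    rw [e1, e2, e3]
    abel
  -- the middle matrix identity
  set W : Matrix (Fin n) (Fin n) ℝ := T * Tᵀ - That * Thatᵀ with hW
  have col : ∀ P Q : Matrix (Fin n) (Fin nc) ℝ,
      P * Pᵀ * A * (Q * Qᵀ) = P * (Pᵀ * A * Q) * Qᵀ := by
    intro P Q; simp only [Matrix.mul_assoc]
  have I3 : W * A * W = T * Tᵀ - T * Gᵀ * Thatᵀ - That * G * Tᵀ + That * Thatᵀ := by
    rw [hW]
    simp only [Matrix.sub_mul, Matrix.mul_sub, col]
    rw [hT, hThat, ← hG, ← hGT, Matrix.mul_one T, Matrix.mul_one That]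
    abel
  have key : W * A * W = T * (1 - Gᵀ * G) * Tᵀ + B * Bᵀ := by
    rw [I3, hB]
    simp only [Matrix.transpose_sub, Matrix.transpose_mul, Matrix.transpose_transpose,
      Matrix.mul_sub, Matrix.sub_mul, Matrix.mul_one, Matrix.one_mul, Matrix.mul_assoc]
    abel
  -- vectors
  set a : Fin n → ℝ := A.mulVec v with ha
  set u : Fin n → ℝ := L.mulVec v with hu
  set c : Fin nc → ℝ := Tᵀ.mulVec a with hc
  have hau : a = L.mulVec u := by rw [ha, hu, Matrix.mulVec_mulVec, hLL]
  have huu : u ⬝ᵥ u = v ⬝ᵥ A.mulVec v := by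
    have h := quad_eq L v
    rw [hLT, hLL] at h
    rw [hu, ← h]
  have hvA : v ᵥ* A = a := by rw [← hAT, Matrix.vecMul_transpose]
  have haT : a ᵥ* T = c := by rw [← Matrix.mulVec_transpose, hc]
  -- c ⬝ c ≤ v ⬝ A v
  have hPv : (T * Tᵀ * A).mulVec v = T.mulVec c := by
    rw [hc, ha, Matrix.mulVec_mulVec, Matrix.mulVec_mulVec]
  have h1 : v ⬝ᵥ A.mulVec (T.mulVec c) = c ⬝ᵥ c := by
    rw [Matrix.dotProduct_mulVec, hvA, Matrix.dotProduct_mulVec, haT]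
  have h2 : (T.mulVec c) ⬝ᵥ A.mulVec (T.mulVec c) = c ⬝ᵥ c := by
    rw [← quad_conj, hT, Matrix.one_mulVec]
  have h3 : (T.mulVec c) ⬝ᵥ A.mulVec v = c ⬝ᵥ c := by
    rw [dotProduct_comm, Matrix.dotProduct_mulVec, haT]
  have hcc : c ⬝ᵥ c ≤ v ⬝ᵥ A.mulVec v := by
    have hr := hAnn (v - T.mulVec c)
    have hexp : (v - T.mulVec c) ⬝ᵥ A.mulVec (v - T.mulVec c)
        = v ⬝ᵥ A.mulVec v - c ⬝ᵥ c := by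
      simp only [Matrix.mulVec_sub, dotProduct_sub, sub_dotProduct, h1, h2, h3]
      ring
    linarith [hexp ▸ hr]
  -- frobenius trace computations
  have hLC : (L * C₁)ᵀ * (L * C₁) = C₁ᵀ * A * C₁ := by
    rw [← hLL]
    simp only [Matrix.transpose_mul, hLT, Matrix.mul_assoc]
  have hLB : (L * B)ᵀ * (L * B) = Bᵀ * A * B := by
    rw [← hLL]
    simp only [Matrix.transpose_mul, hLT, Matrix.mul_assoc]
  have hGG : (Gᵀ * G).trace = frobSq G := by rw [frobSq_eq_trace]
  have hGG' : (G * Gᵀ).trace = frobSq G := by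
    rw [← frobSq_transpose G, frobSq_eq_trace Gᵀ, Matrix.transpose_transpose]
  have hfc : frobSq (L * C₁) = (nc : ℝ) - frobSq G := by
    rw [frobSq_eq_trace, hLC, I1, Matrix.trace_sub, Matrix.trace_one, hGG]
    simp
  have hfb : frobSq (L * B) = (nc : ℝ) - frobSq G := by
    rw [frobSq_eq_trace, hLB, I2, Matrix.trace_sub, Matrix.trace_one, hGG']
    simp
  have hD0 : (0 : ℝ) ≤ (nc : ℝ) - frobSq G := hfc ▸ frobSq_nonneg (L * C₁)
  -- the difference vector
  set d : Fin n → ℝ := W.mulVec a with hd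
  have hdv : d = (T * Tᵀ * A).mulVec v - (That * Thatᵀ * A).mulVec v := by
    rw [hd, ha, Matrix.mulVec_mulVec, hW, Matrix.sub_mul, Matrix.sub_mulVec]
  -- bound d ⬝ A d
  have hdA : d ⬝ᵥ A.mulVec d
      = a ⬝ᵥ (T * (1 - Gᵀ * G) * Tᵀ).mulVec a + a ⬝ᵥ (B * Bᵀ).mulVec a := by
    have hq := quad_conj W A a
    have hWsymm : Wᵀ = W := by
      rw [hW]; simp [Matrix.transpose_sub, Matrix.transpose_mul]
    rw [hWsymm, key] at hq
    rw [hd, ← hq, Matrix.add_mulVec, dotProduct_add]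
  have term1 : a ⬝ᵥ (T * (1 - Gᵀ * G) * Tᵀ).mulVec a
      ≤ ((nc : ℝ) - frobSq G) * (v ⬝ᵥ A.mulVec v) := by
    have hid : T * (1 - Gᵀ * G) * Tᵀ = (L * C₁ * Tᵀ)ᵀ * (L * C₁ * Tᵀ) := by
      rw [← I1, ← hLC]
      simp only [Matrix.transpose_mul, Matrix.transpose_transpose, hLT, Matrix.mul_assoc]
    have hKa : (L * C₁ * Tᵀ).mulVec a = (L * C₁).mulVec c := by
      rw [hc, ← Matrix.mulVec_mulVec]
    rw [hid, quad_eq, hKa]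
    calc (L * C₁).mulVec c ⬝ᵥ (L * C₁).mulVec c
        ≤ frobSq (L * C₁) * (c ⬝ᵥ c) := mulVec_self_le _ _
      _ = ((nc : ℝ) - frobSq G) * (c ⬝ᵥ c) := by rw [hfc]
      _ ≤ ((nc : ℝ) - frobSq G) * (v ⬝ᵥ A.mulVec v) := by
          exact mul_le_mul_of_nonneg_left hcc hD0
  have term2 : a ⬝ᵥ (B * Bᵀ).mulVec a
      ≤ ((nc : ℝ) - frobSq G) * (v ⬝ᵥ A.mulVec v) := by
    have hid : B * Bᵀ = (Bᵀ)ᵀ * Bᵀ := by rw [Matrix.transpose_transpose]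
    have hBa : Bᵀ.mulVec a = ((L * B)ᵀ).mulVec u := by
      rw [Matrix.transpose_mul, hLT, hau, ← Matrix.mulVec_mulVec]
    rw [hid, quad_eq, hBa]
    calc ((L * B)ᵀ).mulVec u ⬝ᵥ ((L * B)ᵀ).mulVec u
        ≤ frobSq ((L * B)ᵀ) * (u ⬝ᵥ u) := mulVec_self_le _ _
      _ = ((nc : ℝ) - frobSq G) * (v ⬝ᵥ A.mulVec v) := by
          rw [frobSq_transpose, hfb, huu]
  -- S-norm triangle-type inequality
  set r : Fin n → ℝ := v - (T * Tᵀ * A).mulVec v with hrdef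
  set w : Fin n → ℝ := v - (That * Thatᵀ * A).mulVec v with hwdef
  have hwrd : w = r + d := by
    rw [hwdef, hrdef, hdv]; abel
  have hpar : w ⬝ᵥ S.mulVec w ≤ 2 * (r ⬝ᵥ S.mulVec r) + 2 * (d ⬝ᵥ S.mulVec d) := by
    have hnn := hSnn (r - d)
    have hexp : (r + d) ⬝ᵥ S.mulVec (r + d) + (r - d) ⬝ᵥ S.mulVec (r - d)
        = 2 * (r ⬝ᵥ S.mulVec r) + 2 * (d ⬝ᵥ S.mulVec d) := by
      simp only [Matrix.mulVec_add, Matrix.mulVec_sub, dotProduct_add, dotProduct_sub,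
        add_dotProduct, sub_dotProduct]
      ring
    rw [hwrd]
    linarith
  -- finish
  have hr_bound : r ⬝ᵥ S.mulVec r ≤ τ * (v ⬝ᵥ A.mulVec v) := happrox v
  have hd_bound : d ⬝ᵥ S.mulVec d
      ≤ M * (2 * (((nc : ℝ) - frobSq G) * (v ⬝ᵥ A.mulVec v))) := by
    have h1 := hdom d
    have h2 : d ⬝ᵥ A.mulVec d ≤ 2 * (((nc : ℝ) - frobSq G) * (v ⬝ᵥ A.mulVec v)) := by
      rw [hdA]; linarith
    nlinarith [hM.le]
  calc w ⬝ᵥ S.mulVec w ≤ 2 * (r ⬝ᵥ S.mulVec r) + 2 * (d ⬝ᵥ S.mulVec d) := hpar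
    _ ≤ (2 * τ + 4 * M * ((nc : ℝ) - frobSq G)) * (v ⬝ᵥ A.mulVec v) := by
        nlinarith [hr_bound, hd_bound]
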